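/- arXiv:2008.00713 — 3 statements merged into one kernel-verified Lean document; each statement's English description precedes it below -/
import Mathlib

section
/- The code is degenerate: a single Z₁ error on qutrit 0 and a single Z₁ error on qutrit 4 generate the same error state on every logical codeword, i.e. Z₁^(0)|i_L⟩ = Z₁^(4)|i_L⟩ for each i ∈ {0,1,2}, where M^(j) denotes the single-qutrit operator M applied at position j. -/
open Complex Matrix

noncomputable section

/-- ω = exp(2πi/3), a primitive cube root of unity. -/
def ω : ℂ := Complex.exp (2 * (Real.pi : ℂ) * Complex.I / 3)

/-- The ternary cyclic shift matrix: X₁ e_j = e_{(j+1) mod 3}. -/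
def X1 : Matrix (Fin 3) (Fin 3) ℂ := Matrix.of fun i j => if i = j + 1 then (1 : ℂ) else 0

/-- The ternary phase matrix Z₁ = diag(1, ω, ω²). -/
def Z1 : Matrix (Fin 3) (Fin 3) ℂ := Matrix.diagonal ![1, ω, ω ^ 2]

/-- X₂ = X₁·X₁. -/
def X2 : Matrix (Fin 3) (Fin 3) ℂ := X1 * X1

/-- Z₂ = Z₁·Z₁. -/
def Z2 : Matrix (Fin 3) (Fin 3) ℂ := Z1 * Z1

/-- The 7-qutrit state space. -/
abbrev V : Type := (Fin 7 → Fin 3) → ℂ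

/-- Standard basis vector of the 7-qutrit state space indexed by a ternary string. -/
def e (s : Fin 7 → Fin 3) : V := fun t => if t = s then 1 else 0

/-- Action on the 7-qutrit space of a tensor product M₀ ⊗ M₁ ⊗ … ⊗ M₆ of 3×3 matrices. -/
def act (M : Fin 7 → Matrix (Fin 3) (Fin 3) ℂ) (v : V) : V :=
  fun s => ∑ t : Fin 7 → Fin 3, (∏ j : Fin 7, M j (s j) (t j)) * v t

/-- `applyAt M j` applies the single-qutrit operator `M` at position `j` (identity elsewhere). -/
def applyAt (M : Matrix (Fin 3) (Fin 3) ℂ) (j : Fin 7) : V → V :=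
  act (fun k => if k = j then M else 1)

/-- The unnormalized logical codeword |0_L⟩. -/
def c0 : V :=
  e ![0,0,0,0,0,0,0] + e ![1,0,2,0,1,0,2] + e ![2,0,1,0,2,0,1]
    + e ![0,1,0,2,0,1,0] + e ![1,1,2,2,1,1,2] + e ![2,1,1,2,2,1,1]
    + e ![0,2,0,1,0,2,0] + e ![1,2,2,1,1,2,2] + e ![2,2,1,1,2,2,1]

/-- The unnormalized logical codeword |1_L⟩. -/
def c1 : V :=
  e ![1,1,1,1,1,1,1] + e ![2,1,0,1,2,1,0] + e ![0,1,2,1,0,1,2]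
    + e ![1,2,1,0,1,2,1] + e ![2,2,0,0,2,2,0] + e ![0,2,2,0,0,2,2]
    + e ![1,0,1,2,1,0,1] + e ![2,0,0,2,2,0,0] + e ![0,0,2,2,0,0,2]

/-- The unnormalized logical codeword |2_L⟩. -/
def c2 : V :=
  e ![2,2,2,2,2,2,2] + e ![0,2,1,2,0,2,1] + e ![1,2,0,2,1,2,0]
    + e ![2,0,2,1,2,0,2] + e ![0,0,1,1,0,0,1] + e ![1,0,0,1,1,0,0]
    + e ![2,1,2,0,2,1,2] + e ![0,1,1,0,0,1,1] + e ![1,1,0,0,1,1,0]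

/-- The three logical codewords. -/
def cw : Fin 3 → V := ![c0, c1, c2]

/-- Phase-error stabilizer S₁ = X₁⊗I⊗X₂⊗I⊗X₁⊗I⊗X₂. -/
def S1 : V → V := act ![X1, 1, X2, 1, X1, 1, X2]

/-- Phase-error stabilizer S₂ = I⊗X₁⊗I⊗X₂⊗I⊗X₁⊗I. -/
def S2 : V → V := act ![1, X1, 1, X2, 1, X1, 1]

/-- Bit-error stabilizer S₃ = Z₁⊗Z₂⊗Z₁⊗Z₂⊗I⊗I⊗I. -/
def S3 : V → V := act ![Z1, Z2, Z1, Z2, 1, 1, 1]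

/-- Bit-error stabilizer S₄ = I⊗I⊗I⊗Z₁⊗Z₂⊗Z₁⊗Z₂. -/
def S4 : V → V := act ![1, 1, 1, Z1, Z2, Z1, Z2]

/-- Bit-error stabilizer S₅ = I⊗Z₁⊗Z₂⊗Z₁⊗Z₂⊗I⊗I. -/
def S5 : V → V := act ![1, Z1, Z2, Z1, Z2, 1, 1]

/-- Bit-error stabilizer S₆ = I⊗I⊗Z₁⊗Z₂⊗Z₁⊗Z₂⊗I. -/
def S6 : V → V := act ![1, 1, Z1, Z2, Z1, Z2, 1]


lemma applyAt_add (M : Matrix (Fin 3) (Fin 3) ℂ) (i : Fin 7) (u v : V) :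
    applyAt M i (u + v) = applyAt M i u + applyAt M i v := by
  funext s
  simp [applyAt, act, mul_add, Finset.sum_add_distrib]

lemma applyAt_diag (d : Fin 3 → ℂ) (i : Fin 7) (s : Fin 7 → Fin 3) :
    applyAt (Matrix.diagonal d) i (e s) = d (s i) • e s := by
  funext s'
  simp only [applyAt, act, e, mul_ite, mul_one, mul_zero, Finset.sum_ite_eq' Finset.univ,
    Finset.mem_univ, if_true, Pi.smul_apply, smul_eq_mul]
  by_cases h : s' = s
  · subst h
    rw [Finset.prod_eq_single i]
    · simp [Matrix.diagonal_apply_eq]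
    · intro k _ hk
      simp [hk, Matrix.one_apply_eq]
    · simp
  · rw [if_neg h]
    obtain ⟨k, hk⟩ : ∃ k, s' k ≠ s k := by
      by_contra hc
      push_neg at hc
      exact h (funext hc)
    apply Finset.prod_eq_zero (Finset.mem_univ k)
    by_cases hki : k = i
    · subst hki
      simp [Matrix.diagonal_apply_ne _ hk]
    · simp [hki, Matrix.one_apply_ne hk]

/-- Degeneracy: a single Z₁ error on qutrit 0 and a single Z₁ error on qutrit 4 generate
the same error state on every logical codeword. -/
theorem degenerate_Z1q0_eq_Z1q4 :
    ∀ i : Fin 3, applyAt Z1 0 (cw i) = applyAt Z1 4 (cw i) := by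
  intro i
  fin_cases i <;>
    simp [cw, c0, c1, c2, Z1, applyAt_add, applyAt_diag]
end
end

section
/- The encoding satisfies the sufficient (orthogonality) condition for quantum error correction: for any two single-qutrit errors σ_m^(j) and σ_n^(k) with σ_m, σ_n ∈ {I, X₁, X₂, Z₁, Z₂, X₁Z₁, X₁Z₂, X₂Z₁, X₂Z₂} and j, k ∈ Fin 7, and for any i ≠ i' in {0,1,2}, one has ⟨i_L| (σ_m^(j))† σ_n^(k) |i'_L⟩ = 0, where M^(j) denotes M applied at position j, † is the conjugate transpose, and ⟨·|·⟩ is the standard Hermitian inner product on V. -/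
open Complex Matrix

noncomputable section

/-- The standard Hermitian inner product on the 7-qutrit state space. -/
def ip (u v : V) : ℂ := ∑ s : Fin 7 → Fin 3, (starRingEnd ℂ) (u s) * v s

-- ===== auxiliary lemmas =====

lemma act_zero' (M : Fin 7 → Matrix (Fin 3) (Fin 3) ℂ) : act M (0 : V) = 0 := by
  funext s; simp [act]

lemma act_add' (M : Fin 7 → Matrix (Fin 3) (Fin 3) ℂ) (u v : V) :
    act M (u + v) = act M u + act M v := by
  funext s; simp [act, mul_add, Finset.sum_add_distrib]

lemma applyAt_listSum (M : Matrix (Fin 3) (Fin 3) ℂ) (j : Fin 7) (L : List V) :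
    applyAt M j L.sum = (L.map (applyAt M j)).sum := by
  induction L with
  | nil => simpa [applyAt] using act_zero' _
  | cons a L ih => simp only [List.sum_cons, List.map_cons, applyAt, act_add'] at *; rw [ih]

lemma ip_zero_left' (w : V) : ip 0 w = 0 := by simp [ip]
lemma ip_add_left' (u v w : V) : ip (u + v) w = ip u w + ip v w := by
  simp [ip, add_mul, Finset.sum_add_distrib]
lemma ip_listSum_left (L : List V) (w : V) :
    ip L.sum w = (L.map (fun u => ip u w)).sum := by
  induction L with
  | nil => simpa using ip_zero_left' w
  | cons a L ih => simp [ip_add_left', ih]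

lemma ip_zero_right' (u : V) : ip u 0 = 0 := by simp [ip]
lemma ip_add_right' (u v w : V) : ip u (v + w) = ip u v + ip u w := by
  simp [ip, mul_add, Finset.sum_add_distrib]
lemma ip_listSum_right (u : V) (L : List V) :
    ip u L.sum = (L.map (ip u)).sum := by
  induction L with
  | nil => simpa using ip_zero_right' u
  | cons a L ih => simp [ip_add_right', ih]

lemma ip_e_apply (t : Fin 7 → Fin 3) (w : V) : ip (e t) w = w t := by
  simp [ip, e, apply_ite]

lemma exists_third (t s : Fin 7 → Fin 3) (j k : Fin 7)
    (h : 3 ≤ (Finset.univ.filter fun p => t p ≠ s p).card) :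
    ∃ p, p ≠ j ∧ p ≠ k ∧ t p ≠ s p := by
  by_contra hc
  push_neg at hc
  have hsub : (Finset.univ.filter fun p => t p ≠ s p) ⊆ {j, k} := by
    intro p hp
    simp only [Finset.mem_filter, Finset.mem_univ, true_and] at hp
    by_contra hmem
    simp only [Finset.mem_insert, Finset.mem_singleton] at hmem
    push_neg at hmem
    exact hp (hc p hmem.1 hmem.2)
  have h1 := Finset.card_le_card hsub
  have h2 : ({j, k} : Finset (Fin 7)).card ≤ 2 := by
    have := Finset.card_insert_le j ({k} : Finset (Fin 7))
    simpa using this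
  omega

/-- Key vanishing lemma: if `t` and `s` differ in at least three positions, then
the matrix element of any two single-site operators between `e t` and `e s` is zero. -/
lemma key (t s : Fin 7 → Fin 3) (A B : Matrix (Fin 3) (Fin 3) ℂ) (j k : Fin 7)
    (h : 3 ≤ (Finset.univ.filter fun p => t p ≠ s p).card) :
    ip (e t) (applyAt A j (applyAt B k (e s))) = 0 := by
  obtain ⟨p, hpj, hpk, hps⟩ := exists_third t s j k h
  rw [ip_e_apply]
  have inner : ∀ u, applyAt B k (e s) u =
      ∏ q : Fin 7, (if q = k then B else 1) (u q) (s q) := by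
    intro u
    simp [applyAt, act, e, Finset.sum_ite_eq']
  show (∑ u : Fin 7 → Fin 3,
      (∏ q : Fin 7, (if q = j then A else 1) (t q) (u q)) * applyAt B k (e s) u) = 0
  apply Finset.sum_eq_zero
  intro u _
  rw [inner]
  by_cases htu : t p = u p
  · apply mul_eq_zero_of_right
    apply Finset.prod_eq_zero (Finset.mem_univ p)
    rw [if_neg hpk, ← htu]
    simp [Matrix.one_apply, hps]
  · apply mul_eq_zero_of_left
    apply Finset.prod_eq_zero (Finset.mem_univ p)
    rw [if_neg hpj]
    simp [Matrix.one_apply, htu]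

/-- The codeword strings as lists. -/
def strs0 : List (Fin 7 → Fin 3) :=
  [![0,0,0,0,0,0,0], ![1,0,2,0,1,0,2], ![2,0,1,0,2,0,1],
   ![0,1,0,2,0,1,0], ![1,1,2,2,1,1,2], ![2,1,1,2,2,1,1],
   ![0,2,0,1,0,2,0], ![1,2,2,1,1,2,2], ![2,2,1,1,2,2,1]]
def strs1 : List (Fin 7 → Fin 3) :=
  [![1,1,1,1,1,1,1], ![2,1,0,1,2,1,0], ![0,1,2,1,0,1,2],
   ![1,2,1,0,1,2,1], ![2,2,0,0,2,2,0], ![0,2,2,0,0,2,2],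
   ![1,0,1,2,1,0,1], ![2,0,0,2,2,0,0], ![0,0,2,2,0,0,2]]
def strs2 : List (Fin 7 → Fin 3) :=
  [![2,2,2,2,2,2,2], ![0,2,1,2,0,2,1], ![1,2,0,2,1,2,0],
   ![2,0,2,1,2,0,2], ![0,0,1,1,0,0,1], ![1,0,0,1,1,0,0],
   ![2,1,2,0,2,1,2], ![0,1,1,0,0,1,1], ![1,1,0,0,1,1,0]]
def strs : Fin 3 → List (Fin 7 → Fin 3) := ![strs0, strs1, strs2]

lemma cw_eq (i : Fin 3) : cw i = ((strs i).map e).sum := by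
  fin_cases i
  · show c0 = (List.map e strs0).sum
    simp only [strs0, List.map_cons, List.map_nil, List.sum_cons, List.sum_nil, c0]
    abel
  · show c1 = (List.map e strs1).sum
    simp only [strs1, List.map_cons, List.map_nil, List.sum_cons, List.sum_nil, c1]
    abel
  · show c2 = (List.map e strs2).sum
    simp only [strs2, List.map_cons, List.map_nil, List.sum_cons, List.sum_nil, c2]
    abel

set_option maxRecDepth 20000 in
lemma d01 : ∀ t ∈ strs0, ∀ s ∈ strs1, 3 ≤ (Finset.univ.filter fun p => t p ≠ s p).card := by
  intro t ht s hs; fin_cases ht <;> fin_cases hs <;> decide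
set_option maxRecDepth 20000 in
lemma d02 : ∀ t ∈ strs0, ∀ s ∈ strs2, 3 ≤ (Finset.univ.filter fun p => t p ≠ s p).card := by
  intro t ht s hs; fin_cases ht <;> fin_cases hs <;> decide
set_option maxRecDepth 20000 in
lemma d12 : ∀ t ∈ strs1, ∀ s ∈ strs2, 3 ≤ (Finset.univ.filter fun p => t p ≠ s p).card := by
  intro t ht s hs; fin_cases ht <;> fin_cases hs <;> decide

lemma dsymm {L L' : List (Fin 7 → Fin 3)}
    (h : ∀ t ∈ L, ∀ s ∈ L', 3 ≤ (Finset.univ.filter fun p => t p ≠ s p).card) :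
    ∀ t ∈ L', ∀ s ∈ L, 3 ≤ (Finset.univ.filter fun p => t p ≠ s p).card := by
  intro t ht s hs
  have := h s hs t ht
  have he : (Finset.univ.filter fun p => t p ≠ s p)
      = (Finset.univ.filter fun p => s p ≠ t p) := by
    apply Finset.filter_congr; intro p _; simp [ne_comm]
  rw [he]; exact this

lemma dist3 : ∀ i i' : Fin 3, i ≠ i' → ∀ t ∈ strs i, ∀ s ∈ strs i',
    3 ≤ (Finset.univ.filter fun p => t p ≠ s p).card := by
  intro i i' hne
  fin_cases i <;> fin_cases i' <;>
    first
      | exact absurd rfl hne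
      | exact d01 | exact d02 | exact d12
      | exact dsymm d01 | exact dsymm d02 | exact dsymm d12

/-- Orthogonality condition for error correction: for any two single-qutrit errors
σ_m^(j), σ_n^(k) with σ_m, σ_n ∈ {I, X₁, X₂, Z₁, Z₂, X₁Z₁, X₁Z₂, X₂Z₁, X₂Z₂} and any
i ≠ i', one has ⟨i_L| (σ_m^(j))† σ_n^(k) |i'_L⟩ = 0. -/
theorem orthogonality_condition :
    ∀ σm ∈ ({1, X1, X2, Z1, Z2, X1 * Z1, X1 * Z2, X2 * Z1, X2 * Z2} :
        Set (Matrix (Fin 3) (Fin 3) ℂ)),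
      ∀ σn ∈ ({1, X1, X2, Z1, Z2, X1 * Z1, X1 * Z2, X2 * Z1, X2 * Z2} :
          Set (Matrix (Fin 3) (Fin 3) ℂ)),
        ∀ j k : Fin 7, ∀ i i' : Fin 3, i ≠ i' →
          ip (cw i) (applyAt σmᴴ j (applyAt σn k (cw i'))) = 0 := by
  intro σm _ σn _ j k i i' hne
  rw [cw_eq i, cw_eq i']
  rw [applyAt_listSum, applyAt_listSum, ip_listSum_left]
  apply List.sum_eq_zero
  intro x hx
  rw [List.mem_map] at hx
  obtain ⟨y, hy, rfl⟩ := hx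
  rw [List.mem_map] at hy
  obtain ⟨t, ht, rfl⟩ := hy
  rw [ip_listSum_right]
  apply List.sum_eq_zero
  intro z hz
  rw [List.map_map, List.map_map, List.map_map, List.mem_map] at hz
  obtain ⟨s, hs, rfl⟩ := hz
  exact key t s _ _ j k (dist3 i i' hne t ht s hs)
end
end

section
/- The stabilizers S₃, S₄, S₅, S₆ correct any single bit error: (i) for every a ∈ {1,2}, j ∈ Fin 7, and logical codeword |ψ⟩ ∈ {|0_L⟩,|1_L⟩,|2_L⟩}, the corrupted state X_a^(j)|ψ⟩ is an eigenvector of each of S₃, S₄, S₅, S₆ with eigenvalue a cube root of unity; and (ii) the syndrome map sending each of the 14 single bit errors X_a^(j) (a ∈ {1,2}, j ∈ Fin 7) to its 4-tuple of eigenvalues (λ₃, λ₄, λ₅, λ₆) is injective, so distinct single bit errors produce distinct syndromes. -/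
open Complex Matrix

noncomputable section

/-- XP 0 = X₁, XP 1 = X₂ : the two ternary bit-error operators indexed by {1,2}. -/
def XP : Fin 2 → Matrix (Fin 3) (Fin 3) ℂ := ![X1, X2]


/-! ### Auxiliary lemmas -/

lemma hprim : IsPrimitiveRoot ω 3 := by
  have := Complex.isPrimitiveRoot_exp 3 (by norm_num)
  norm_num at this
  exact this

lemma hω3 : ω ^ 3 = 1 := hprim.pow_eq_one

lemma pow_mod (n : ℕ) : ω ^ n = ω ^ (n % 3) := by
  conv_lhs => rw [← Nat.div_add_mod n 3]
  rw [pow_add, pow_mul, hω3, one_pow, one_mul]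

lemma pow_eq_of_zmod {n k : ℕ} (h : (n : ZMod 3) = (k : ZMod 3)) : ω ^ n = ω ^ k := by
  rw [pow_mod n, pow_mod k]
  have h2 := (ZMod.natCast_eq_natCast_iff n k 3).mp h
  rw [Nat.ModEq] at h2
  rw [h2]

lemma act_e (M : Fin 7 → Matrix (Fin 3) (Fin 3) ℂ) (s : Fin 7 → Fin 3) :
    act M (e s) = fun s' => ∏ j, M j (s' j) (s j) := by
  funext s'
  simp only [act, e, mul_ite, mul_one, mul_zero]
  rw [Finset.sum_ite_eq' Finset.univ s (fun t => ∏ j, M j (s' j) (t j))]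
  simp

lemma act_sum {ι : Type*} (F : Finset ι) (f : ι → V) (M : Fin 7 → Matrix (Fin 3) (Fin 3) ℂ) :
    act M (∑ k ∈ F, f k) = ∑ k ∈ F, act M (f k) := by
  funext s
  simp only [act, Finset.sum_apply, Finset.mul_sum]
  exact Finset.sum_comm

lemma act_diag (d : Fin 7 → Fin 3 → ℂ) (s : Fin 7 → Fin 3) :
    act (fun k => Matrix.diagonal (d k)) (e s) = (∏ k, d k (s k)) • e s := by
  rw [act_e]
  funext s'
  by_cases h : s' = s
  · subst h; simp [e, Matrix.diagonal_apply_eq]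
  · obtain ⟨k, hk⟩ := Function.ne_iff.mp h
    simp only [Pi.smul_apply, e, if_neg h, smul_zero]
    exact Finset.prod_eq_zero (Finset.mem_univ k) (Matrix.diagonal_apply_ne _ hk)

lemma applyAt_shift_e (X : Matrix (Fin 3) (Fin 3) ℂ) (δ : Fin 3)
    (hX : X = Matrix.of fun i j => if i = j + δ then 1 else 0) (j : Fin 7) (s : Fin 7 → Fin 3) :
    applyAt X j (e s) = e (Function.update s j (s j + δ)) := by
  rw [applyAt, act_e]
  funext s'
  by_cases h : s' = Function.update s j (s j + δ)
  · subst h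
    rw [e]; rw [if_pos rfl]
    apply Finset.prod_eq_one
    intro k _
    by_cases hk : k = j
    · subst hk; simp [hX, Function.update_self]
    · simp [hk, Function.update_of_ne hk, Matrix.one_apply]
  · rw [e, if_neg h]
    obtain ⟨k, hk⟩ := Function.ne_iff.mp h
    apply Finset.prod_eq_zero (Finset.mem_univ k)
    by_cases hkj : k = j
    · subst hkj
      rw [Function.update_self] at hk
      simp [hX, hk]
    · rw [Function.update_of_ne hkj] at hk
      simp [hkj, Matrix.one_apply, hk]

/-- The check tables for `S3, S4, S5, S6`. -/
def zt : Fin 4 → Fin 7 → ℕ :=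
  ![![1,2,1,2,0,0,0], ![0,0,0,1,2,1,2], ![0,1,2,1,2,0,0], ![0,0,1,2,1,2,0]]

def SL : Fin 4 → (V → V) := ![S3, S4, S5, S6]

def E (m : Fin 4) (s : Fin 7 → Fin 3) : ℕ := ∑ k, zt m k * (s k).val

lemma one_diag : (1 : Matrix (Fin 3) (Fin 3) ℂ) = Matrix.diagonal (fun _ : Fin 3 => (1:ℂ)) := by
  rw [← Matrix.diagonal_one]

lemma hZ1 : Z1 = Matrix.diagonal (fun v : Fin 3 => ω ^ (v.val)) := by
  rw [Z1]
  exact congrArg Matrix.diagonal (by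
    funext v; fin_cases v
    · norm_num
    · norm_num
    · norm_num)

lemma hZ2 : Z2 = Matrix.diagonal (fun v : Fin 3 => ω ^ (2 * v.val)) := by
  rw [Z2, hZ1, Matrix.diagonal_mul_diagonal]
  exact congrArg Matrix.diagonal (by funext v; rw [← pow_add, two_mul])

lemma SL_diag (m : Fin 4) :
    SL m = act (fun k => Matrix.diagonal (fun v : Fin 3 => ω ^ (zt m k * v.val))) := by
  fin_cases m <;>
    exact congrArg act (by
      funext k
      fin_cases k <;>
        first
          | (show Z1 = Matrix.diagonal fun v : Fin 3 => ω ^ (1 * v.val)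
             rw [hZ1]; exact congrArg Matrix.diagonal (funext fun v => by rw [one_mul]))
          | (show Z2 = Matrix.diagonal fun v : Fin 3 => ω ^ (2 * v.val)
             exact hZ2)
          | (show (1 : Matrix (Fin 3) (Fin 3) ℂ) = Matrix.diagonal fun v : Fin 3 => ω ^ (0 * v.val)
             rw [one_diag]; exact congrArg Matrix.diagonal (funext fun v => by rw [zero_mul, pow_zero])))

lemma hX2 : X2 = Matrix.of fun i j => if i = j + 2 then 1 else 0 := by
  funext i j
  show (X1 * X1) i j = _
  rw [Matrix.mul_apply, Finset.sum_eq_single (j + 1)]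
  · show (if i = (j + 1) + 1 then (1:ℂ) else 0) * (if j + 1 = j + 1 then (1:ℂ) else 0) = _
    rw [if_pos rfl, mul_one, add_assoc]
    norm_num
    rfl
  · intro k _ hk
    show (X1 i k) * (if k = j + 1 then (1:ℂ) else 0) = 0
    rw [if_neg hk, mul_zero]
  · intro h
    exact absurd (Finset.mem_univ _) h

lemma hXP (a : Fin 2) :
    XP a = Matrix.of fun i j =>
      if i = j + (⟨(a.val + 1) % 3, Nat.mod_lt _ (by norm_num)⟩ : Fin 3) then 1 else 0 := by
  fin_cases a
  · show X1 = _; rw [X1]; rfl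
  · show X2 = _; rw [hX2]; rfl

/-- Support strings of the three codewords. -/
def supp : Fin 3 → Fin 9 → Fin 7 → Fin 3 :=
  ![![![0,0,0,0,0,0,0], ![1,0,2,0,1,0,2], ![2,0,1,0,2,0,1],
     ![0,1,0,2,0,1,0], ![1,1,2,2,1,1,2], ![2,1,1,2,2,1,1],
     ![0,2,0,1,0,2,0], ![1,2,2,1,1,2,2], ![2,2,1,1,2,2,1]],
    ![![1,1,1,1,1,1,1], ![2,1,0,1,2,1,0], ![0,1,2,1,0,1,2],
     ![1,2,1,0,1,2,1], ![2,2,0,0,2,2,0], ![0,2,2,0,0,2,2],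
     ![1,0,1,2,1,0,1], ![2,0,0,2,2,0,0], ![0,0,2,2,0,0,2]],
    ![![2,2,2,2,2,2,2], ![0,2,1,2,0,2,1], ![1,2,0,2,1,2,0],
     ![2,0,2,1,2,0,2], ![0,0,1,1,0,0,1], ![1,0,0,1,1,0,0],
     ![2,1,2,0,2,1,2], ![0,1,1,0,0,1,1], ![1,1,0,0,1,1,0]]]

lemma cw_eq_s16 (i : Fin 3) : cw i = ∑ k : Fin 9, e (supp i k) := by
  fin_cases i <;> simp only [Fin.sum_univ_succ, Fin.sum_univ_zero, add_zero, ← add_assoc] <;> rfl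

lemma hstab : ∀ (m : Fin 4) (i : Fin 3) (k : Fin 9), E m (supp i k) % 3 = 0 := by decide

lemma supp_inj : ∀ i : Fin 3, Function.Injective (supp i) := by decide

lemma synd_inj : ∀ (a a' : Fin 2) (j j' : Fin 7),
    (∀ m : Fin 4, (zt m j * (a.val + 1)) % 3 = (zt m j' * (a'.val + 1)) % 3) →
    a = a' ∧ j = j' := by decide

lemma Eshift (m : Fin 4) (j : Fin 7) (s : Fin 7 → Fin 3) (v : Fin 3) :
    E m (Function.update s j v) + zt m j * (s j).val = E m s + zt m j * v.val := by
  unfold E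
  have h1 : ∀ k ∈ Finset.univ.erase j,
      zt m k * ((Function.update s j v) k).val = zt m k * (s k).val := by
    intro k hk
    rw [Function.update_of_ne (Finset.ne_of_mem_erase hk)]
  rw [← Finset.add_sum_erase _ (fun k => zt m k * ((Function.update s j v) k).val)
        (Finset.mem_univ j),
      ← Finset.add_sum_erase _ (fun k => zt m k * (s k).val) (Finset.mem_univ j),
      Finset.sum_congr rfl h1, Function.update_self]
  ring

/-- The corrupted codeword as an explicit sum of basis vectors. -/
lemma err_eq (b : Fin 2) (jj : Fin 7) (i : Fin 3) :
    applyAt (XP b) jj (cw i)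
      = ∑ k : Fin 9, e (Function.update (supp i k) jj
          (supp i k jj + (⟨(b.val + 1) % 3, Nat.mod_lt _ (by norm_num)⟩ : Fin 3))) := by
  rw [cw_eq_s16]
  rw [show applyAt (XP b) jj = act (fun k => if k = jj then XP b else 1) from rfl]
  rw [act_sum]
  exact Finset.sum_congr rfl fun k _ => applyAt_shift_e _ _ (hXP b) jj _

/-- The key eigenvalue computation. -/
lemma key_s16 (m : Fin 4) (b : Fin 2) (jj : Fin 7) (i : Fin 3) :
    SL m (applyAt (XP b) jj (cw i))
      = ω ^ (zt m jj * (b.val + 1)) • applyAt (XP b) jj (cw i) := by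
  rw [err_eq, SL_diag m, act_sum, Finset.smul_sum]
  refine Finset.sum_congr rfl fun k _ => ?_
  rw [act_diag]
  have hp : (∏ p, ω ^ (zt m p * ((Function.update (supp i k) jj
      (supp i k jj + (⟨(b.val + 1) % 3, Nat.mod_lt _ (by norm_num)⟩ : Fin 3))) p).val))
      = ω ^ (E m (Function.update (supp i k) jj
          (supp i k jj + (⟨(b.val + 1) % 3, Nat.mod_lt _ (by norm_num)⟩ : Fin 3)))) := by
    rw [E, ← Finset.prod_pow_eq_pow_sum]
  rw [hp]
  congr 1
  apply pow_eq_of_zmod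
  have h1 := congrArg (Nat.cast : ℕ → ZMod 3)
    (Eshift m jj (supp i k) (supp i k jj + (⟨(b.val + 1) % 3, Nat.mod_lt _ (by norm_num)⟩ : Fin 3)))
  have h0 : ((E m (supp i k) : ℕ) : ZMod 3) = 0 :=
    (ZMod.natCast_eq_zero_iff _ _).mpr (Nat.dvd_of_mod_eq_zero (hstab m i k))
  have h2 : ((supp i k jj + (⟨(b.val + 1) % 3, Nat.mod_lt _ (by norm_num)⟩ : Fin 3)).val : ZMod 3)
      = ((supp i k jj).val : ZMod 3) + ((b.val + 1 : ℕ) : ZMod 3) := by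
    rw [Fin.val_add]
    push_cast [ZMod.natCast_mod]
    ring
  push_cast at h1
  rw [h2] at h1
  push_cast at h1 ⊢
  linear_combination h1 + h0

lemma nonzero (b : Fin 2) (jj : Fin 7) (i : Fin 3) :
    ∃ t, applyAt (XP b) jj (cw i) t ≠ 0 := by
  set δ : Fin 3 := ⟨(b.val + 1) % 3, Nat.mod_lt _ (by norm_num)⟩ with hδ
  set u : Fin 9 → Fin 7 → Fin 3 :=
    fun k => Function.update (supp i k) jj (supp i k jj + δ) with hu
  have hinj : Function.Injective u := by
    intro x y hxy
    apply supp_inj i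
    funext p
    by_cases hp : p = jj
    · subst hp
      have h1 := congrFun hxy p
      rw [hu] at h1
      simp only [Function.update_self] at h1
      exact add_right_cancel h1
    · have h1 := congrFun hxy p
      rw [hu] at h1
      simpa only [Function.update_of_ne hp] using h1
  refine ⟨u 0, ?_⟩
  rw [err_eq]
  simp only [Finset.sum_apply, e]
  rw [Finset.sum_eq_single (0 : Fin 9)]
  · rw [if_pos rfl]; exact one_ne_zero
  · intro k _ hk
    exact if_neg fun hc => hk ((hinj hc).symm)
  · intro h; exact absurd (Finset.mem_univ _) h

/-- The stabilizers S₃,…,S₆ correct any single bit error: (i) every corrupted codeword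
X_a^(j)|ψ⟩ is an eigenvector of each of S₃,…,S₆ with eigenvalue a cube root of unity;
(ii) the syndrome map of the 14 single bit errors is injective. -/
theorem single_bit_error_correction :
    (∀ a : Fin 2, ∀ j : Fin 7, ∀ i : Fin 3,
      ∃ l3 l4 l5 l6 : ℂ, l3 ^ 3 = 1 ∧ l4 ^ 3 = 1 ∧ l5 ^ 3 = 1 ∧ l6 ^ 3 = 1 ∧
        S3 (applyAt (XP a) j (cw i)) = l3 • applyAt (XP a) j (cw i) ∧
        S4 (applyAt (XP a) j (cw i)) = l4 • applyAt (XP a) j (cw i) ∧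
        S5 (applyAt (XP a) j (cw i)) = l5 • applyAt (XP a) j (cw i) ∧
        S6 (applyAt (XP a) j (cw i)) = l6 • applyAt (XP a) j (cw i)) ∧
    (∀ a a' : Fin 2, ∀ j j' : Fin 7, ∀ l3 l4 l5 l6 : ℂ,
      (∀ i : Fin 3,
        S3 (applyAt (XP a) j (cw i)) = l3 • applyAt (XP a) j (cw i) ∧
        S4 (applyAt (XP a) j (cw i)) = l4 • applyAt (XP a) j (cw i) ∧
        S5 (applyAt (XP a) j (cw i)) = l5 • applyAt (XP a) j (cw i) ∧
        S6 (applyAt (XP a) j (cw i)) = l6 • applyAt (XP a) j (cw i)) →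
      (∀ i : Fin 3,
        S3 (applyAt (XP a') j' (cw i)) = l3 • applyAt (XP a') j' (cw i) ∧
        S4 (applyAt (XP a') j' (cw i)) = l4 • applyAt (XP a') j' (cw i) ∧
        S5 (applyAt (XP a') j' (cw i)) = l5 • applyAt (XP a') j' (cw i) ∧
        S6 (applyAt (XP a') j' (cw i)) = l6 • applyAt (XP a') j' (cw i)) →
      a = a' ∧ j = j') := by
  constructor
  · intro a j i
    refine ⟨ω ^ (zt 0 j * (a.val + 1)), ω ^ (zt 1 j * (a.val + 1)),
           ω ^ (zt 2 j * (a.val + 1)), ω ^ (zt 3 j * (a.val + 1)),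
           ?_, ?_, ?_, ?_, key_s16 0 a j i, key_s16 1 a j i, key_s16 2 a j i, key_s16 3 a j i⟩ <;>
      rw [← pow_mul, mul_comm, pow_mul, hω3, one_pow]
  · intro a a' j j' l3 l4 l5 l6 h h'
    have hval : ∀ (b : Fin 2) (jjj : Fin 7) (m : Fin 4) (l : ℂ),
        SL m (applyAt (XP b) jjj (cw 0)) = l • applyAt (XP b) jjj (cw 0) →
        l = ω ^ (zt m jjj * (b.val + 1)) := by
      intro b jjj m l hl
      have hk := key_s16 m b jjj 0
      rw [hl] at hk
      obtain ⟨t, ht⟩ := nonzero b jjj 0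
      have h3 := congrFun hk t
      simp only [Pi.smul_apply, smul_eq_mul] at h3
      exact mul_right_cancel₀ ht h3
    have e0 : l3 = ω ^ (zt 0 j * (a.val + 1)) := hval a j 0 l3 (h 0).1
    have e1 : l4 = ω ^ (zt 1 j * (a.val + 1)) := hval a j 1 l4 (h 0).2.1
    have e2 : l5 = ω ^ (zt 2 j * (a.val + 1)) := hval a j 2 l5 (h 0).2.2.1
    have e3 : l6 = ω ^ (zt 3 j * (a.val + 1)) := hval a j 3 l6 (h 0).2.2.2
    have f0 : l3 = ω ^ (zt 0 j' * (a'.val + 1)) := hval a' j' 0 l3 (h' 0).1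
    have f1 : l4 = ω ^ (zt 1 j' * (a'.val + 1)) := hval a' j' 1 l4 (h' 0).2.1
    have f2 : l5 = ω ^ (zt 2 j' * (a'.val + 1)) := hval a' j' 2 l5 (h' 0).2.2.1
    have f3 : l6 = ω ^ (zt 3 j' * (a'.val + 1)) := hval a' j' 3 l6 (h' 0).2.2.2
    refine synd_inj a a' j j' ?_
    intro m
    have hg : ω ^ (zt m j * (a.val + 1)) = ω ^ (zt m j' * (a'.val + 1)) := by
      fin_cases m
      · show ω ^ (zt 0 j * (a.val + 1)) = ω ^ (zt 0 j' * (a'.val + 1))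
        rw [← e0, ← f0]
      · show ω ^ (zt 1 j * (a.val + 1)) = ω ^ (zt 1 j' * (a'.val + 1))
        rw [← e1, ← f1]
      · show ω ^ (zt 2 j * (a.val + 1)) = ω ^ (zt 2 j' * (a'.val + 1))
        rw [← e2, ← f2]
      · show ω ^ (zt 3 j * (a.val + 1)) = ω ^ (zt 3 j' * (a'.val + 1))
        rw [← e3, ← f3]
    rw [pow_mod (zt m j * (a.val + 1)), pow_mod (zt m j' * (a'.val + 1))] at hg
    exact hprim.pow_inj (Nat.mod_lt _ (by norm_num)) (Nat.mod_lt _ (by norm_num)) hg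
end
end
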